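/- Let r be an odd positive integer with r ≥ 3, and let n = 2·p₁^{α₁}·p₂^{α₂}⋯p_s^{α_s}, where p₁ < p₂ < ⋯ < p_s are odd primes and each α_i is a positive integer. Then n is a Schemmel nontotient number of order r if and only if n + r is composite and p_s − r ≠ 2·p₁^{α₁}⋯p_{s−1}^{α_{s−1}}. -/
import Mathlib
/-- The `r`-th Schemmel totient function: multiplicative, with
`S_r(p^a) = 0` if `p ≤ r` and `S_r(p^a) = p^(a-1) * (p - r)` if `p > r`. -/
def schemmel (r n : ℕ) : ℕ :=
  n.factorization.prod (fun p a => if p ≤ r then 0 else p ^ (a - 1) * (p - r))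

lemma schemmel_prime_pow {r q b : ℕ} (hq : q.Prime) (hb : b ≠ 0) :
    schemmel r (q ^ b) = if q ≤ r then 0 else q ^ (b - 1) * (q - r) := by
  unfold schemmel
  rw [hq.factorization_pow, Finsupp.prod, Finsupp.support_single_ne_zero _ hb,
    Finset.prod_singleton, Finsupp.single_eq_same]

lemma exists_schemmel_iff_aux (r : ℕ) (hrodd : Odd r) (hr3 : 3 ≤ r) (s : ℕ)
    (p a : Fin (s + 1) → ℕ) (hp : ∀ i, (p i).Prime) (hodd : ∀ i, Odd (p i))
    (hmono : StrictMono p) (ha : ∀ i, 0 < a i) (n : ℕ)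
    (hn : n = 2 * ∏ i, p i ^ a i) :
    (∃ x : ℕ, 0 < x ∧ schemmel r x = n) ↔
      ((n + r).Prime ∨
        p (Fin.last s) - r = 2 * ∏ i : Fin s, p i.castSucc ^ a i.castSucc) := by
  set m := ∏ i, p i ^ a i with hm
  have hm0 : 0 < m := Finset.prod_pos (fun i _ => pow_pos (hp i).pos _)
  have hmodd : ¬ 2 ∣ m := by
    intro h
    obtain ⟨i, -, hi⟩ := (Nat.prime_two).prime.exists_mem_finset_dvd h
    have h2 : 2 = p i :=
      (Nat.prime_dvd_prime_iff_eq Nat.prime_two (hp i)).mp (Nat.prime_two.dvd_of_dvd_pow hi)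
    have := hodd i
    rw [← h2] at this
    exact (Nat.not_odd_iff_even.mpr even_two) this
  have hn0 : n ≠ 0 := by rw [hn]; positivity
  constructor
  · rintro ⟨x, hx0, hxs⟩
    set F := x.factorization with hF
    have hallr : ∀ q ∈ F.support, r < q := by
      intro q hq
      by_contra hle
      push_neg at hle
      apply hn0
      rw [← hxs]
      unfold schemmel
      rw [Finsupp.prod]
      refine Finset.prod_eq_zero hq ?_
      simp [hle]
    have hprime : ∀ q ∈ F.support, q.Prime := fun q hq =>
      Nat.prime_of_mem_primeFactors (by rwa [Nat.support_factorization] at hq)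
    have heven : ∀ q ∈ F.support,
        2 ∣ (fun q b => if q ≤ r then 0 else q ^ (b - 1) * (q - r)) q (F q) := by
      intro q hq
      have hqr := hallr q hq
      have hqodd : Odd q := (hprime q hq).odd_of_ne_two (by omega)
      have : Even (q - r) := Nat.Odd.sub_odd hqodd hrodd
      simp only [if_neg (by omega : ¬ q ≤ r)]
      exact Dvd.dvd.mul_left this.two_dvd _
    have h2pow : 2 ^ F.support.card ∣ n := by
      rw [← hxs]
      unfold schemmel
      rw [Finsupp.prod, ← Finset.prod_const]
      exact Finset.prod_dvd_prod_of_dvd _ _ heven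
    have hcard : F.support.card ≤ 1 := by
      by_contra hc
      push_neg at hc
      have h4 : 4 ∣ n := dvd_trans (by
        have : (2:ℕ)^2 ∣ 2 ^ F.support.card := pow_dvd_pow 2 hc
        simpa using this) h2pow
      rw [hn] at h4
      exact hmodd (by omega)
    interval_cases hcc : F.support.card
    · -- support empty: n = 1, contradiction with n even
      have hsupp : F.support = ∅ := Finset.card_eq_zero.mp hcc
      have : n = 1 := by
        rw [← hxs]; unfold schemmel; rw [Finsupp.prod, hsupp, Finset.prod_empty]
      omega
    · obtain ⟨q, hq⟩ := Finset.card_eq_one.mp hcc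
      have hqmem : q ∈ F.support := by rw [hq]; exact Finset.mem_singleton_self q
      have hqp : q.Prime := hprime q hqmem
      have hqr : r < q := hallr q hqmem
      set b := F q with hb
      have hb0 : b ≠ 0 := Finsupp.mem_support_iff.mp hqmem
      have hkey : q ^ (b - 1) * (q - r) = n := by
        rw [← hxs]; unfold schemmel
        rw [Finsupp.prod, hq, Finset.prod_singleton, if_neg (by omega)]
      rcases Nat.lt_or_ge b 2 with hb1 | hb2
      · -- b = 1
        left
        have hb1' : b = 1 := by omega
        rw [hb1'] at hkey
        simp at hkey
        have : n + r = q := by omega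
        rwa [this]
      · -- b ≥ 2
        right
        have hqdvd : q ∣ n := by
          rw [← hkey]
          exact Dvd.dvd.mul_right (dvd_pow_self q (by omega)) _
        have hq2 : q ≠ 2 := by omega
        have hqm : q ∣ m := by
          rw [hn] at hqdvd
          rcases (hqp.prime.dvd_mul).mp hqdvd with h | h
          · exact absurd ((Nat.prime_dvd_prime_iff_eq hqp Nat.prime_two).mp h) hq2
          · exact h
        obtain ⟨j, -, hj⟩ := hqp.prime.exists_mem_finset_dvd hqm
        have hqj : q = p j :=
          (Nat.prime_dvd_prime_iff_eq hqp (hp j)).mp (hqp.dvd_of_dvd_pow hj)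
        -- exponent of q in n is a j
        have hqnr : 0 < q - r := by omega
        have hndvd : ¬ q ∣ (q - r) := Nat.not_dvd_of_pos_of_lt hqnr (by omega)
        have hexp : b - 1 = a j := by
          have h1 : n.factorization q = b - 1 := by
            rw [← hkey, Nat.factorization_mul (pow_ne_zero _ hqp.pos.ne') (by omega),
              hqp.factorization_pow]
            simp [Nat.factorization_eq_zero_of_not_dvd hndvd]
          have h2 : n.factorization q = a j := by
            rw [hn, Nat.factorization_mul (by norm_num) hm0.ne', hm,
              Nat.factorization_prod (fun i _ => pow_ne_zero _ (hp i).pos.ne')]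
            have h2f : (Nat.factorization 2) q = 0 :=
              Nat.factorization_eq_zero_of_not_dvd
                (fun h => hq2 ((Nat.prime_dvd_prime_iff_eq hqp Nat.prime_two).mp h))
            rw [Finsupp.add_apply, h2f, zero_add, Finsupp.finset_sum_apply]
            have hpt : ∀ i, ((p i ^ a i).factorization) q = if p i = q then a i else 0 := by
              intro i; rw [(hp i).factorization_pow, Finsupp.single_apply]
            rw [Finset.sum_congr rfl (fun i _ => hpt i),
              Finset.sum_eq_single_of_mem j (Finset.mem_univ j)
                (fun i _ hij => if_neg (fun hpi => hij (hmono.injective (hpi.trans hqj)))),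
              if_pos hqj.symm]
          omega
        -- cancel q ^ (a j)
        have hcancel : q - r = 2 * ∏ i ∈ Finset.univ.erase j, p i ^ a i := by
          have hmsplit : m = p j ^ a j * ∏ i ∈ Finset.univ.erase j, p i ^ a i :=
            (Finset.mul_prod_erase Finset.univ _ (Finset.mem_univ j)).symm
          have hkey' : q ^ a j * (q - r) = n := by rw [← hexp]; exact hkey
          have : q ^ a j * (q - r) = q ^ a j * (2 * ∏ i ∈ Finset.univ.erase j, p i ^ a i) := by
            rw [hkey', hn, hmsplit, hqj]; ring
          exact Nat.eq_of_mul_eq_mul_left (pow_pos hqp.pos _) this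
        have hjlast : j = Fin.last s := by
          by_contra hne
          have hjlt : j < Fin.last s := lt_of_le_of_ne (Fin.le_last j) hne
          have hmem : Fin.last s ∈ Finset.univ.erase j :=
            Finset.mem_erase.mpr ⟨(ne_of_lt hjlt).symm, Finset.mem_univ _⟩
          have hdvd : p (Fin.last s) ∣ q - r := by
            rw [hcancel]
            exact Dvd.dvd.mul_left
              (dvd_trans (dvd_pow_self _ (ha _).ne') (Finset.dvd_prod_of_mem _ hmem)) 2
          have hle := Nat.le_of_dvd hqnr hdvd
          have : q < p (Fin.last s) := hqj ▸ hmono hjlt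
          omega
        subst hjlast
        have herase : ∏ i ∈ Finset.univ.erase (Fin.last s), p i ^ a i
            = ∏ i : Fin s, p i.castSucc ^ a i.castSucc := by
          have h1 := Finset.mul_prod_erase Finset.univ (fun i => p i ^ a i)
            (Finset.mem_univ (Fin.last s))
          have h2 := Fin.prod_univ_castSucc (fun i => p i ^ a i)
          refine Nat.eq_of_mul_eq_mul_left (pow_pos (hp (Fin.last s)).pos (a (Fin.last s))) ?_
          rw [h1, h2]; ring
        rw [← hqj, ← herase]
        exact hcancel
  · rintro (hpr | heq)
    · refine ⟨n + r, by omega, ?_⟩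
      have : schemmel r (n + r) = if n + r ≤ r then 0 else (n+r) ^ 0 * (n + r - r) := by
        have := schemmel_prime_pow (r := r) hpr one_ne_zero
        simpa using this
      rw [this, if_neg (by omega)]
      simp
    · refine ⟨p (Fin.last s) ^ (a (Fin.last s) + 1), pow_pos (hp _).pos _, ?_⟩
      have hprod0 : 0 < ∏ i : Fin s, p i.castSucc ^ a i.castSucc :=
        Finset.prod_pos (fun i _ => pow_pos (hp _).pos _)
      have hqr : r < p (Fin.last s) := by omega
      rw [schemmel_prime_pow (hp _) (by omega), if_neg (by omega)]
      simp only [Nat.add_sub_cancel]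
      rw [heq, hn, hm, Fin.prod_univ_castSucc (fun i => p i ^ a i)]
      ring

theorem nontotient_iff_of_two_mul (r : ℕ) (hrodd : Odd r) (hr3 : 3 ≤ r) (s : ℕ)
    (p a : Fin (s + 1) → ℕ) (hp : ∀ i, (p i).Prime) (hodd : ∀ i, Odd (p i))
    (hmono : StrictMono p) (ha : ∀ i, 0 < a i) (n : ℕ)
    (hn : n = 2 * ∏ i, p i ^ a i) :
    (¬ ∃ x : ℕ, 0 < x ∧ schemmel r x = n) ↔
      (¬ (n + r).Prime ∧
        p (Fin.last s) - r ≠ 2 * ∏ i : Fin s, p i.castSucc ^ a i.castSucc) := by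
  rw [Iff.not (exists_schemmel_iff_aux r hrodd hr3 s p a hp hodd hmono ha n hn), not_or]
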